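/- For any security view V = (D_v, ann), any instance T of the original DTD D with view T_v, any accessible element node n of T, and any element type B: the parent of n in the view T_v is of type B iff n ⊨ A^B in T, where A^B := A^+[1]/ε::B and A^+ := ↑+::*[A1^acc]. Equivalently, n has an accessible B element as its nearest accessible ancestor iff n ⊨ A^B. -/

import Mathlib

/-!
# Core model: XML documents, DTDs, XPath fragments and XML security views

Following the paper "XPath query rewriting over recursive XML security views":

* a DTD is a triple `(Ele, P, root)` with `P` mapping element types to regular expressions;
* XML documents are finite node-labeled ordered trees, nodes are identified with their
  positions (lists of child indices);
* the XPath syntax below is the full fragment `X↑[n,=]`; the sub-fragments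
  `X` (downward), `X↑`, `X↑[n]` are carved out by Boolean membership predicates;
* evaluation of paths/qualifiers is parametrized by an accessibility predicate `acc` on
  nodes: with `acc = fun _ => True` it is evaluation over the original document `T`, and
  with `acc = Accessible S T` it is evaluation over the (virtual) view `T_v` of `T`
  (nodes of `T_v` are identified with the accessible nodes of `T`, the parent in `T_v`
  being the nearest accessible ancestor in `T`);
* an access specification `S = (D, ann)` has a finite list of annotations with values
  `Y`, `N`, `[Q]`, and `ann(root) = Y` by default.
-/

abbrev Name := String

/-- Node labels: element labels, or text nodes carrying a string value. -/
inductive Lab where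
  | elem (a : Name)
  | text (s : String)
deriving DecidableEq

/-- Regular expressions for DTD content models. -/
inductive Regex where
  | str
  | eps
  | elem (b : Name)
  | cat (r₁ r₂ : Regex)
  | alt (r₁ r₂ : Regex)
  | star (r : Regex)

/-- `r.occurs B` : element type `B` occurs in the regular expression `r`. -/
def Regex.occurs : Regex → Name → Prop
  | .str, _ => False
  | .eps, _ => False
  | .elem b, B => b = B
  | .cat r₁ r₂, B => r₁.occurs B ∨ r₂.occurs B
  | .alt r₁ r₂, B => r₁.occurs B ∨ r₂.occurs B
  | .star r, B => r.occurs B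

/-- Size of a regular expression: number of subelement types and operators. -/
def Regex.size : Regex → ℕ
  | .str => 1
  | .eps => 1
  | .elem _ => 1
  | .cat r₁ r₂ => r₁.size + r₂.size + 1
  | .alt r₁ r₂ => r₁.size + r₂.size + 1
  | .star r => r.size + 1

/-- The language of a regular expression, over words of labels
(`str` matches any single text node). -/
def Regex.Matches : Regex → List Lab → Prop
  | .str, w => ∃ s, w = [Lab.text s]
  | .eps, w => w = []
  | .elem b, w => w = [Lab.elem b]
  | .cat r₁ r₂, w => ∃ u v, w = u ++ v ∧ r₁.Matches u ∧ r₂.Matches v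
  | .alt r₁ r₂, w => r₁.Matches w ∨ r₂.Matches w
  | .star r, w => ∃ ws : List (List Lab), (∀ u ∈ ws, r.Matches u) ∧ w = ws.flatten

/-- A DTD `D = (Ele, P, root)`. -/
structure DTD where
  Ele : Finset Name
  root : Name
  P : Name → Regex
  root_mem : root ∈ Ele
  /-- each production `P(A)` is a regular expression over `Ele` -/
  occ_mem : ∀ A ∈ Ele, ∀ B, (P A).occurs B → B ∈ Ele

/-- A DTD is recursive iff some element type is defined, directly or indirectly,
in terms of itself. -/
def DTD.Recursive (D : DTD) : Prop :=
  ∃ A, Relation.TransGen (fun X Y => (D.P X).occurs Y) A A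

/-- Finite node-labeled ordered trees (XML trees). -/
inductive XTree where
  | mk (lab : Lab) (children : List XTree)

def XTree.lab : XTree → Lab
  | .mk l _ => l

def XTree.children : XTree → List XTree
  | .mk _ c => c

/-- Node positions: paths of child indices from the root (the root is `[]`). -/
abbrev Pos := List ℕ

/-- The subtree of `t` at position `p`, if it exists. -/
def XTree.sub? : XTree → Pos → Option XTree
  | t, [] => some t
  | t, i :: p =>
    match t.children[i]? with
    | some c => XTree.sub? c p
    | none => none

/-- `n` is a node of `t`. -/
def XTree.IsNode (t : XTree) (n : Pos) : Prop := (t.sub? n).isSome = true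

/-- Element type of the node at position `n` (none for text nodes / non-nodes). -/
def typeAt (t : XTree) (n : Pos) : Option Name :=
  match t.sub? n with
  | some s =>
    match s.lab with
    | .elem a => some a
    | _ => none
  | none => none

/-- The element at position `n` has `c` as text content (a text child with value `c`). -/
def HasText (t : XTree) (n : Pos) (c : String) : Prop :=
  ∃ s, t.sub? n = some s ∧ Lab.text c ∈ s.children.map XTree.lab

/-- `m` is a strict ancestor of `n`. -/
def StrictAnc (m n : Pos) : Prop := m <+: n ∧ m ≠ n

/-- Document order on positions (lexicographic; an ancestor precedes its descendants). -/
def posLt (m n : Pos) : Prop := List.Lex (· < ·) m n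

/-- Parent position. -/
def parentPos (n : Pos) : Pos := n.dropLast

/-- `T` conforms to `D` (`T` is an instance of `D`): the root is the unique node
labeled `root`, every node is labeled with an element type of `D` or with text,
the children word of each `A`-node matches `P(A)`, and text nodes are leaves. -/
def Conforms (t : XTree) (D : DTD) : Prop :=
  t.lab = Lab.elem D.root ∧
  (∀ n s, t.sub? n = some s → s.lab = Lab.elem D.root → n = []) ∧
  (∀ n s, t.sub? n = some s →
      (∃ A, s.lab = Lab.elem A ∧ A ∈ D.Ele) ∨ ∃ c, s.lab = Lab.text c) ∧
  (∀ n s A, t.sub? n = some s → s.lab = Lab.elem A →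
      (D.P A).Matches (s.children.map XTree.lab)) ∧
  (∀ n s c, t.sub? n = some s → s.lab = Lab.text c → s.children = [])

/-! ## XPath syntax: the full fragment `X↑[n,=]` -/

inductive Axis where
  | child | descendant | self | parent | ancestor | ancestorOrSelf
deriving DecidableEq

inductive NodeTest where
  | name (a : Name)
  | star
deriving DecidableEq

mutual
  /-- XPath paths (the full fragment `X↑[n,=]`): steps, filters `p[q]`,
  position predicates `p[k]`, composition `p/p` and union `p ∪ p`. -/
  inductive XPath where
    | axis (ax : Axis) (nt : NodeTest)
    | filter (p : XPath) (q : XQual)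
    | pos (p : XPath) (k : ℕ)
    | seq (p₁ p₂ : XPath)
    | union (p₁ p₂ : XPath)
  /-- XPath qualifiers: paths, text comparison `p = c`, node comparison
  `[p₁ = p₂]`, and Boolean combinations. -/
  inductive XQual where
    | path (p : XPath)
    | cmp (p : XPath) (c : String)
    | nodeEq (p₁ p₂ : XPath)
    | and (q₁ q₂ : XQual)
    | or (q₁ q₂ : XQual)
    | not (q : XQual)
end

def Axis.downb : Axis → Bool
  | .child => true
  | .descendant => true
  | _ => false

mutual
  /-- Membership in the downward fragment `X` (only `↓`, `↓⁺`, no position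
  predicate, no node comparison). -/
  def XPath.inXb : XPath → Bool
    | .axis ax _ => ax.downb
    | .filter p q => p.inXb && q.inXb
    | .pos _ _ => false
    | .seq p₁ p₂ => p₁.inXb && p₂.inXb
    | .union p₁ p₂ => p₁.inXb && p₂.inXb
  def XQual.inXb : XQual → Bool
    | .path p => p.inXb
    | .cmp p _ => p.inXb
    | .nodeEq _ _ => false
    | .and q₁ q₂ => q₁.inXb && q₂.inXb
    | .or q₁ q₂ => q₁.inXb && q₂.inXb
    | .not q => q.inXb
end

mutual
  /-- Membership in `X↑` (`X` plus the self and upward axes). -/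
  def XPath.inXUpb : XPath → Bool
    | .axis _ _ => true
    | .filter p q => p.inXUpb && q.inXUpb
    | .pos _ _ => false
    | .seq p₁ p₂ => p₁.inXUpb && p₂.inXUpb
    | .union p₁ p₂ => p₁.inXUpb && p₂.inXUpb
  def XQual.inXUpb : XQual → Bool
    | .path p => p.inXUpb
    | .cmp p _ => p.inXUpb
    | .nodeEq _ _ => false
    | .and q₁ q₂ => q₁.inXUpb && q₂.inXUpb
    | .or q₁ q₂ => q₁.inXUpb && q₂.inXUpb
    | .not q => q.inXUpb
end

mutual
  /-- Membership in `X↑[n]` (`X↑` plus the position predicate; no node comparison). -/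
  def XPath.inXUpPosb : XPath → Bool
    | .axis _ _ => true
    | .filter p q => p.inXUpPosb && q.inXUpPosb
    | .pos p _ => p.inXUpPosb
    | .seq p₁ p₂ => p₁.inXUpPosb && p₂.inXUpPosb
    | .union p₁ p₂ => p₁.inXUpPosb && p₂.inXUpPosb
  def XQual.inXUpPosb : XQual → Bool
    | .path p => p.inXUpPosb
    | .cmp p _ => p.inXUpPosb
    | .nodeEq _ _ => false
    | .and q₁ q₂ => q₁.inXUpPosb && q₂.inXUpPosb
    | .or q₁ q₂ => q₁.inXUpPosb && q₂.inXUpPosb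
    | .not q => q.inXUpPosb
end

mutual
  /-- The element-type names occurring in a path. -/
  def XPath.names : XPath → List Name
    | .axis _ (.name a) => [a]
    | .axis _ .star => []
    | .filter p q => p.names ++ q.names
    | .pos p _ => p.names
    | .seq p₁ p₂ => p₁.names ++ p₂.names
    | .union p₁ p₂ => p₁.names ++ p₂.names
  def XQual.names : XQual → List Name
    | .path p => p.names
    | .cmp p _ => p.names
    | .nodeEq p₁ p₂ => p₁.names ++ p₂.names
    | .and q₁ q₂ => q₁.names ++ q₂.names
    | .or q₁ q₂ => q₁.names ++ q₂.names
    | .not q => q.names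
end

/-! ## XPath semantics, parametrized by an accessibility predicate -/

def TestOk (t : XTree) (nt : NodeTest) (y : Pos) : Prop :=
  match nt with
  | .name a => typeAt t y = some a
  | .star => (typeAt t y).isSome = true

/-- Axis relations in the tree restricted to `acc`-nodes: the child relation is
"nearest accessible descendant", etc. (with `acc = fun _ => True` these are the
usual axes of the original document). -/
def AxisRel (acc : Pos → Prop) : Axis → Pos → Pos → Prop
  | .self, x, y => y = x
  | .child, x, y => StrictAnc x y ∧ acc y ∧ ∀ z, StrictAnc x z → StrictAnc z y → ¬ acc z
  | .descendant, x, y => StrictAnc x y ∧ acc y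
  | .parent, x, y => StrictAnc y x ∧ acc y ∧ ∀ z, StrictAnc y z → StrictAnc z x → ¬ acc z
  | .ancestor, x, y => StrictAnc y x ∧ acc y
  | .ancestorOrSelf, x, y => (y = x ∨ StrictAnc y x) ∧ acc y

/-- The `k`-th node (1-indexed) of an (ordered) node set; reverse axes produce their
results nearest-first, so the order used here is reverse document order. -/
noncomputable def nthRev (Sp : Set Pos) (k : ℕ) : Set Pos :=
  {x | x ∈ Sp ∧ ({y | y ∈ Sp ∧ posLt x y}).ncard = k - 1}

mutual
  /-- `evalP t acc p x` : the node set `x⟦p⟧` obtained by evaluating path `p`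
  at context node `x`, in the document `t` restricted to `acc`-nodes. -/
  noncomputable def evalP (t : XTree) (acc : Pos → Prop) : XPath → Pos → Set Pos
    | .axis ax nt, x => {y | t.IsNode y ∧ AxisRel acc ax x y ∧ TestOk t nt y}
    | .filter p q, x => {y | y ∈ evalP t acc p x ∧ evalQ t acc q y}
    | .pos p k, x => nthRev (evalP t acc p x) k
    | .seq p₁ p₂, x => {z | ∃ y, y ∈ evalP t acc p₁ x ∧ z ∈ evalP t acc p₂ y}
    | .union p₁ p₂, x => evalP t acc p₁ x ∪ evalP t acc p₂ x
  /-- `evalQ t acc q x` : the qualifier `q` holds at context node `x` (`x ⊨ q`). -/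
  noncomputable def evalQ (t : XTree) (acc : Pos → Prop) : XQual → Pos → Prop
    | .path p, x => (evalP t acc p x).Nonempty
    | .cmp p c, x => ∃ y, y ∈ evalP t acc p x ∧ HasText t y c
    | .nodeEq p₁ p₂, x => ∃ y, evalP t acc p₁ x = {y} ∧ evalP t acc p₂ x = {y}
    | .and q₁ q₂, x => evalQ t acc q₁ x ∧ evalQ t acc q₂ x
    | .or q₁ q₂, x => evalQ t acc q₁ x ∨ evalQ t acc q₂ x
    | .not q, x => ¬ evalQ t acc q x
end

/-! ## Access specifications, accessibility, security views -/

/-- Annotation values `Y`, `N`, `[Q]`. -/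
inductive AnnVal where
  | Y
  | N
  | cond (q : XQual)

/-- An access specification `S = (D, ann)`: `ann` is a finite partial map given as a
list of triples `(A, B, ann(A,B))`, defined only on productions of `D`, with
qualifiers taken from the downward fragment `X`; `ann(root) = Y` by default. -/
structure AccessSpec where
  D : DTD
  ann : List (Name × Name × AnnVal)
  ann_nodup : (ann.map fun e => (e.1, e.2.1)).Nodup
  ann_dom : ∀ e ∈ ann, e.1 ∈ D.Ele ∧ (D.P e.1).occurs e.2.1
  ann_X : ∀ e ∈ ann, ∀ q, e.2.2 = AnnVal.cond q → q.inXb = true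

/-- `ann(A,B)`, if defined. -/
def AccessSpec.lookup (S : AccessSpec) (A B : Name) : Option AnnVal :=
  (S.ann.find? fun e => e.1 == A && e.2.1 == B).map fun e => e.2.2

/-- Node `n` (of type `B`, with parent of type `A`) is concerned by the
annotation value `v` : `ann(A,B) = v`. -/
def ConcernedBy (S : AccessSpec) (t : XTree) (n : Pos) (v : AnnVal) : Prop :=
  ∃ A B, n ≠ [] ∧ typeAt t n = some B ∧ typeAt t (parentPos n) = some A ∧
    S.lookup A B = some v

/-- Node `n` is concerned by an annotation. -/
def Concerned (S : AccessSpec) (t : XTree) (n : Pos) : Prop := ∃ v, ConcernedBy S t n v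

/-- The annotation concerning `n` is valid at `n` : its value is `Y`, or it is
`[Q]` and `n ⊨ Q` (annotation qualifiers are evaluated over the original document). -/
def ValidAnnAt (S : AccessSpec) (t : XTree) (n : Pos) : Prop :=
  ConcernedBy S t n AnnVal.Y ∨
    ∃ q, ConcernedBy S t n (AnnVal.cond q) ∧ evalQ t (fun _ => True) q n

/-- Concerned, treating the root as concerned by the default annotation `ann(root) = Y`. -/
def ConcernedR (S : AccessSpec) (t : XTree) (n : Pos) : Prop := n = [] ∨ Concerned S t n

/-- Valid annotation, the root's default annotation being valid. -/
def ValidR (S : AccessSpec) (t : XTree) (n : Pos) : Prop := n = [] ∨ ValidAnnAt S t n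

/-- Condition (i) of the accessibility definition: `n` is concerned by a valid
annotation, or `n` is not concerned by an annotation and the first (nearest)
ancestor of `n` concerned by an annotation has that annotation valid at it. -/
def CondI (S : AccessSpec) (t : XTree) (n : Pos) : Prop :=
  (ConcernedR S t n ∧ ValidR S t n) ∨
    (¬ ConcernedR S t n ∧ ∃ m, StrictAnc m n ∧ ConcernedR S t m ∧ ValidR S t m ∧
      ∀ m', StrictAnc m m' → StrictAnc m' n → ¬ Concerned S t m')

/-- Condition (ii): every ancestor concerned by an annotation `[Q']` satisfies `Q'`. -/
def CondII (S : AccessSpec) (t : XTree) (n : Pos) : Prop :=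
  ∀ m q, StrictAnc m n → ConcernedBy S t m (AnnVal.cond q) →
    evalQ t (fun _ => True) q m

/-- Node `n` of the instance `T` is accessible w.r.t. the access specification `S`. -/
def Accessible (S : AccessSpec) (t : XTree) (n : Pos) : Prop :=
  t.IsNode n ∧ CondI S t n ∧ CondII S t n

/-- The element types of the DTD view `D_v` (the element types of `D` that are not
eliminated): the root, and every type reachable from an accessible type through a
production edge not annotated `N`. -/
inductive AccType (S : AccessSpec) : Name → Prop where
  | root : AccType S S.D.root
  | step {A B : Name} : AccType S A → (S.D.P A).occurs B →
      S.lookup A B ≠ some AnnVal.N → AccType S B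

/-- `B` is a child type of `A` in the DTD view (element types hidden in between
are spliced out). -/
inductive ViewChild (S : AccessSpec) : Name → Name → Prop where
  | direct {A B} : (S.D.P A).occurs B → S.lookup A B ≠ some AnnVal.N → ViewChild S A B
  | through {A C B} : (S.D.P A).occurs C → S.lookup A C = some AnnVal.N →
      ViewChild S C B → ViewChild S A B

/-- The child-type relation of the DTD view `D_v`. -/
def ViewChildV (S : AccessSpec) (A B : Name) : Prop :=
  AccType S A ∧ AccType S B ∧ ViewChild S A B

/-- The security view `V = (D_v, ann)` is recursive: its DTD view `D_v` is recursive. -/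
def ViewRecursive (S : AccessSpec) : Prop :=
  ∃ A, Relation.TransGen (ViewChildV S) A A

/-- `|D_v|` : the number of element types of the DTD view. -/
noncomputable def viewSize (S : AccessSpec) : ℕ :=
  {A | A ∈ S.D.Ele ∧ AccType S A}.ncard

/-- A query formulated over the DTD view `D_v` : all its element-type names are
element types of `D_v`. -/
def OverView (S : AccessSpec) (p : XPath) : Prop :=
  ∀ a ∈ p.names, AccType S a

/-- `Q(T_v)` : evaluation of `Q` over the (virtual) view `T_v` of `T`, nodes of `T_v`
being identified with the accessible nodes of `T`. -/
noncomputable def evalView (S : AccessSpec) (t : XTree) (p : XPath) (x : Pos) : Set Pos :=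
  evalP t (Accessible S t) p x

/-- `Q(T)` : evaluation of `Q` over the original document `T`. -/
noncomputable def evalFull (t : XTree) (p : XPath) (x : Pos) : Set Pos :=
  evalP t (fun _ => True) p x

/-! ## The predicates `A₁^acc`, `A₂^acc`, `A^acc`, `A⁺`, `A^B` -/

/-- A trivially true qualifier (at element nodes). -/
def qTrue : XQual := XQual.path (XPath.axis Axis.self NodeTest.star)

/-- `ε::A/↑::A'` for an annotation entry `ann(A',A)` (entry `(A', A, v)`). -/
def annStep (e : Name × Name × AnnVal) : XQual :=
  XQual.path (XPath.seq (XPath.axis Axis.self (NodeTest.name e.2.1))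
    (XPath.axis Axis.parent (NodeTest.name e.1)))

/-- `ε::A.σ(A',A)/↑::A'` : `ε::A[Q]/↑::A'` if `ann(A',A) = [Q]`, `ε::A/↑::A'` if
`ann(A',A) = Y`, nothing if `ann(A',A) = N`. -/
def annStepSigma (e : Name × Name × AnnVal) : Option XQual :=
  match e.2.2 with
  | AnnVal.Y => some (annStep e)
  | AnnVal.cond q => some (XQual.path (XPath.seq
      (XPath.filter (XPath.axis Axis.self (NodeTest.name e.2.1)) q)
      (XPath.axis Axis.parent (NodeTest.name e.1))))
  | AnnVal.N => none

/-- `ε::root ∨_{ann(A',A) ∈ ann} ε::A/↑::A'`. -/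
def qual1 (S : AccessSpec) : XQual :=
  S.ann.foldr (fun e q => XQual.or (annStep e) q)
    (XQual.path (XPath.axis Axis.self (NodeTest.name S.D.root)))

/-- `ε::root ∨_{ann(A',A) = Y | [Q]} ε::A.σ(A',A)/↑::A'`. -/
def qual2 (S : AccessSpec) : XQual :=
  S.ann.foldr
    (fun e q => match annStepSigma e with | some s => XQual.or s q | none => q)
    (XQual.path (XPath.axis Axis.self (NodeTest.name S.D.root)))

/-- `A₁^acc := ↑*::*[qual1][1][qual2]`. -/
def A1acc (S : AccessSpec) : XPath :=
  XPath.filter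
    (XPath.pos (XPath.filter (XPath.axis Axis.ancestorOrSelf NodeTest.star) (qual1 S)) 1)
    (qual2 S)

/-- `A₂^acc := ⋀_{ann(A',A) = [Q]} not (↑⁺::A[not Q]/↑::A')`. -/
def A2acc (S : AccessSpec) : XQual :=
  S.ann.foldr
    (fun e q => match e.2.2 with
      | AnnVal.cond qq => XQual.and (XQual.not (XQual.path (XPath.seq
          (XPath.filter (XPath.axis Axis.ancestor (NodeTest.name e.2.1)) (XQual.not qq))
          (XPath.axis Axis.parent (NodeTest.name e.1))))) q
      | _ => q)
    qTrue

/-- The accessibility predicate `A^acc := A₁^acc ∧ A₂^acc`. -/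
def Aacc (S : AccessSpec) : XQual := XQual.and (XQual.path (A1acc S)) (A2acc S)

/-- `A⁺ := ↑⁺::*[A₁^acc]` (the accessible ancestors, nearest first). -/
def Aplus (S : AccessSpec) : XPath :=
  XPath.filter (XPath.axis Axis.ancestor NodeTest.star) (XQual.path (A1acc S))

/-- `A^B := A⁺[1]/ε::B`. -/
def AB (S : AccessSpec) (B : Name) : XPath :=
  XPath.seq (XPath.pos (Aplus S) 1) (XPath.axis Axis.self (NodeTest.name B))
/-! ### Auxiliary lemmas -/

lemma sub?_append (t : XTree) (p q : Pos) :
    XTree.sub? t (p ++ q) = (XTree.sub? t p).bind (fun s => XTree.sub? s q) := by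
  induction p generalizing t with
  | nil => simp [XTree.sub?]
  | cons i p ih =>
    simp only [List.cons_append, XTree.sub?]
    cases t.children[i]? with
    | none => simp
    | some c => simpa using ih c

lemma isNode_prefix {t : XTree} {m n : Pos} (h : m <+: n) (hn : t.IsNode n) : t.IsNode m := by
  obtain ⟨r, rfl⟩ := h
  unfold XTree.IsNode at *
  rw [sub?_append] at hn
  cases hs : t.sub? m with
  | none => rw [hs] at hn; simp at hn
  | some s => simp [hs]

lemma strictAnc_ne_nil {m n : Pos} (h : StrictAnc m n) : n ≠ [] := by
  rintro rfl
  exact h.2 (List.prefix_nil.mp h.1)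

lemma length_lt_of_strictAnc {a b : Pos} (h : StrictAnc a b) : a.length < b.length :=
  lt_of_le_of_ne h.1.length_le (fun hl => h.2 (h.1.eq_of_length hl))

lemma strictAnc_trans_prefix {a b c : Pos} (h1 : StrictAnc a b) (h2 : b <+: c) :
    StrictAnc a c := by
  refine ⟨h1.1.trans h2, fun hEq => ?_⟩
  have ha := length_lt_of_strictAnc h1
  have hb := h2.length_le
  rw [hEq] at ha
  omega

lemma parentPos_strictAnc {y : Pos} (hy : y ≠ []) : StrictAnc (parentPos y) y := by
  refine ⟨List.dropLast_prefix y, fun hEq => ?_⟩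
  have h1 : y.dropLast.length = y.length - 1 := List.length_dropLast
  have h2 : 0 < y.length := List.length_pos_iff.mpr hy
  have : (parentPos y).length = y.length := by rw [hEq]
  simp only [parentPos, h1] at this
  omega

lemma prefix_dropLast {z y : Pos} (h : z <+: y) (hne : z ≠ y) : z <+: y.dropLast := by
  have hlt : z.length < y.length := length_lt_of_strictAnc ⟨h, hne⟩
  have hl : z.length ≤ y.dropLast.length := by
    rw [List.length_dropLast]; omega
  exact List.prefix_of_prefix_length_le h (List.dropLast_prefix y) hl

lemma parent_char {z y : Pos} :
    (StrictAnc z y ∧ ∀ w, StrictAnc z w → StrictAnc w y → False) ↔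
      (y ≠ [] ∧ z = parentPos y) := by
  constructor
  · rintro ⟨⟨hp, hne⟩, hmax⟩
    have hy : y ≠ [] := strictAnc_ne_nil ⟨hp, hne⟩
    refine ⟨hy, ?_⟩
    have h1 : z <+: y.dropLast := prefix_dropLast hp hne
    by_contra hzz
    exact hmax y.dropLast ⟨h1, hzz⟩ (parentPos_strictAnc hy)
  · rintro ⟨hy, rfl⟩
    refine ⟨parentPos_strictAnc hy, ?_⟩
    rintro w ⟨hw1, hw2⟩ ⟨hw3, hw4⟩
    have h5 : w <+: y.dropLast := prefix_dropLast hw3 hw4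
    have h6 : w = y.dropLast :=
      h5.eq_of_length (le_antisymm h5.length_le hw1.length_le)
    exact hw2 h6.symm

lemma posLt_of_strictAnc {m n : Pos} (h : StrictAnc m n) : posLt m n := by
  obtain ⟨⟨r, rfl⟩, hne⟩ := h
  cases r with
  | nil => simp at hne
  | cons a t =>
    clear hne
    induction m with
    | nil => exact List.Lex.nil
    | cons b m ih => exact List.Lex.cons ih

lemma posLt_irrefl (m : Pos) : ¬ posLt m m := irrefl_of (List.Lex (· < ·)) m

lemma posLt_asymm {m n : Pos} (h1 : posLt m n) (h2 : posLt n m) : False :=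
  asymm_of (List.Lex (· < ·)) h1 h2

lemma posLt_iff_strictAnc {x y n : Pos} (hx : x <+: n) (hy : y <+: n) :
    posLt x y ↔ StrictAnc x y := by
  constructor
  · intro h
    rcases List.prefix_or_prefix_of_prefix hx hy with hp | hp
    · refine ⟨hp, ?_⟩
      rintro rfl
      exact posLt_irrefl x h
    · rcases eq_or_ne y x with rfl | hne
      · exact absurd h (posLt_irrefl y)
      · exact absurd (posLt_of_strictAnc ⟨hp, hne⟩) (fun h2 => posLt_asymm h h2)
  · exact posLt_of_strictAnc

lemma finite_prefixes (n : Pos) : {y : Pos | y <+: n}.Finite := by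
  apply Set.Finite.subset ((Set.finite_Iic n.length).image (fun k => n.take k))
  intro y hy
  exact ⟨y.length, hy.length_le, (List.prefix_iff_eq_take.mp hy).symm⟩

lemma mem_nthRev_one {Sp : Set Pos} {n : Pos} (hsub : ∀ y ∈ Sp, y <+: n) (x : Pos) :
    x ∈ nthRev Sp 1 ↔ x ∈ Sp ∧ ∀ y ∈ Sp, ¬ StrictAnc x y := by
  have hfin : {y | y ∈ Sp ∧ posLt x y}.Finite :=
    (finite_prefixes n).subset (fun y hy => hsub y hy.1)
  unfold nthRev
  simp only [Set.mem_setOf_eq]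
  constructor
  · rintro ⟨hx, hcard⟩
    refine ⟨hx, fun y hy hs => ?_⟩
    have hmem : y ∈ {y | y ∈ Sp ∧ posLt x y} := ⟨hy, posLt_of_strictAnc hs⟩
    have hempty : {y | y ∈ Sp ∧ posLt x y} = ∅ :=
      (Set.ncard_eq_zero hfin).mp (by simpa using hcard)
    rw [hempty] at hmem
    exact hmem
  · rintro ⟨hx, hmax⟩
    refine ⟨hx, ?_⟩
    have hempty : {y | y ∈ Sp ∧ posLt x y} = ∅ := by
      ext y
      simp only [Set.mem_setOf_eq, Set.mem_empty_iff_false, iff_false, not_and]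
      intro hy hlt
      exact hmax y hy ((posLt_iff_strictAnc (hsub x hx) (hsub y hy)).mp hlt)
    simp [hempty]

lemma exists_max_mem {Sp : Set Pos} {n : Pos} (hsub : ∀ y ∈ Sp, y <+: n)
    (hne : Sp.Nonempty) : ∃ x ∈ Sp, ∀ y ∈ Sp, y <+: x := by
  obtain ⟨x, hx, hmax'⟩ :=
    Set.exists_max_image Sp List.length ((finite_prefixes n).subset hsub) hne
  have hmax : ∀ y ∈ Sp, x.length ≤ y.length → x.length = y.length :=
    fun y hy h => le_antisymm h (hmax' y hy)
  refine ⟨x, hx, fun y hy => ?_⟩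
  rcases List.prefix_or_prefix_of_prefix (hsub y hy) (hsub x hx) with hp | hp
  · exact hp
  · have heq := hp.eq_of_length (hmax y hy hp.length_le)
    rw [heq]

/-! ### Tree and typing lemmas -/

lemma typeAt_isSome_iff {T : XTree} {m : Pos} {A : Name} :
    typeAt T m = some A ↔ ∃ s, T.sub? m = some s ∧ s.lab = Lab.elem A := by
  unfold typeAt
  cases h : T.sub? m with
  | none => simp
  | some s =>
    cases hl : s.lab with
    | elem a => simp [hl]
    | text c => simp [hl]

lemma typeAt_isSome_of_strictAnc {D : DTD} {T : XTree} (hT : Conforms T D) {m n : Pos}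
    (hn : T.IsNode n) (h : StrictAnc m n) : ∃ A, typeAt T m = some A := by
  obtain ⟨⟨r, rfl⟩, hne⟩ := h
  have hr : r ≠ [] := by rintro rfl; simp at hne
  unfold XTree.IsNode at hn
  rw [sub?_append] at hn
  cases hs : T.sub? m with
  | none => rw [hs] at hn; simp at hn
  | some s =>
    rw [hs] at hn
    simp only [Option.bind_some] at hn
    cases r with
    | nil => exact absurd rfl hr
    | cons i r' =>
      have hc : ∃ c, s.children[i]? = some c := by
        unfold XTree.sub? at hn
        cases hg : s.children[i]? with
        | none => rw [hg] at hn; simp at hn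
        | some c => exact ⟨c, rfl⟩
      obtain ⟨c, hc⟩ := hc
      rcases hT.2.2.1 m s hs with ⟨A, hA, _⟩ | ⟨cs, hcs⟩
      · exact ⟨A, typeAt_isSome_iff.mpr ⟨s, hs, hA⟩⟩
      · have hnil := hT.2.2.2.2 m s cs hs hcs
        rw [hnil] at hc
        simp at hc

lemma typeAt_nil {D : DTD} {T : XTree} (hT : Conforms T D) : typeAt T [] = some D.root :=
  typeAt_isSome_iff.mpr ⟨T, rfl, hT.1⟩

lemma typeAt_root_iff {D : DTD} {T : XTree} (hT : Conforms T D) {y : Pos} :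
    typeAt T y = some D.root ↔ y = [] := by
  constructor
  · intro h
    obtain ⟨s, hs, hl⟩ := typeAt_isSome_iff.mp h
    exact hT.2.1 y s hs hl
  · rintro rfl
    exact typeAt_nil hT

/-! ### Lookup lemmas -/

lemma lookup_of_mem (S : AccessSpec) {e : Name × Name × AnnVal} (he : e ∈ S.ann) :
    S.lookup e.1 e.2.1 = some e.2.2 := by
  unfold AccessSpec.lookup
  cases hf : S.ann.find? (fun e' => e'.1 == e.1 && e'.2.1 == e.2.1) with
  | none =>
    have := List.find?_eq_none.mp hf e he
    simp at this
  | some e' =>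
    have hmem := List.mem_of_find?_eq_some hf
    have hp := List.find?_some hf
    simp only [Bool.and_eq_true, beq_iff_eq] at hp
    have heq : e' = e :=
      List.inj_on_of_nodup_map S.ann_nodup hmem he (by simp [hp.1, hp.2])
    simp [heq]

lemma lookup_eq_some {S : AccessSpec} {A B : Name} {v : AnnVal}
    (h : S.lookup A B = some v) :
    ∃ e ∈ S.ann, e.1 = A ∧ e.2.1 = B ∧ e.2.2 = v := by
  unfold AccessSpec.lookup at h
  cases hf : S.ann.find? (fun e => e.1 == A && e.2.1 == B) with
  | none => rw [hf] at h; simp at h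
  | some e =>
    rw [hf] at h
    simp only [Option.map_some] at h
    have hp := List.find?_some hf
    simp only [Bool.and_eq_true, beq_iff_eq] at hp
    exact ⟨e, List.mem_of_find?_eq_some hf, hp.1, hp.2, by injection h⟩

/-! ### Semantics of the building blocks -/

lemma evalQ_selfName {T : XTree} {a : Name} {y : Pos} :
    evalQ T (fun _ => True) (XQual.path (XPath.axis Axis.self (NodeTest.name a))) y ↔
      T.IsNode y ∧ typeAt T y = some a := by
  simp only [evalQ, evalP, AxisRel, TestOk, Set.Nonempty, Set.mem_setOf_eq]
  constructor
  · rintro ⟨z, h1, rfl, h3⟩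
    exact ⟨h1, h3⟩
  · rintro ⟨h1, h2⟩
    exact ⟨y, h1, rfl, h2⟩

lemma evalQ_annStep {T : XTree} {e : Name × Name × AnnVal} {y : Pos} :
    evalQ T (fun _ => True) (annStep e) y ↔
      T.IsNode y ∧ y ≠ [] ∧ typeAt T y = some e.2.1 ∧
        typeAt T (parentPos y) = some e.1 := by
  simp only [annStep, evalQ, evalP, AxisRel, TestOk, Set.Nonempty, Set.mem_setOf_eq]
  constructor
  · rintro ⟨z, w, ⟨hw1, rfl, hw3⟩, hz1, ⟨hzanc, -, hzmax⟩, hz3⟩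
    obtain ⟨hy, rfl⟩ := parent_char.mp ⟨hzanc, fun u h1 h2 => hzmax u h1 h2 trivial⟩
    exact ⟨hw1, hy, hw3, hz3⟩
  · rintro ⟨h1, h2, h3, h4⟩
    refine ⟨parentPos y, y, ⟨h1, rfl, h3⟩,
      isNode_prefix (List.dropLast_prefix y) h1, ?_, h4⟩
    obtain ⟨hpa, hpb⟩ := parent_char.mpr ⟨h2, rfl⟩
    exact ⟨hpa, trivial, fun u h1 h2 _ => hpb u h1 h2⟩

lemma evalQ_annStepCond {T : XTree} {A B : Name} {q : XQual} {y : Pos} :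
    evalQ T (fun _ => True) (XQual.path (XPath.seq
      (XPath.filter (XPath.axis Axis.self (NodeTest.name B)) q)
      (XPath.axis Axis.parent (NodeTest.name A)))) y ↔
      T.IsNode y ∧ y ≠ [] ∧ typeAt T y = some B ∧ evalQ T (fun _ => True) q y ∧
        typeAt T (parentPos y) = some A := by
  simp only [evalQ, evalP, AxisRel, TestOk, Set.Nonempty, Set.mem_setOf_eq]
  constructor
  · rintro ⟨z, w, ⟨⟨hw1, rfl, hw3⟩, hwq⟩, hz1, ⟨hzanc, -, hzmax⟩, hz3⟩
    obtain ⟨hy, rfl⟩ := parent_char.mp ⟨hzanc, fun u h1 h2 => hzmax u h1 h2 trivial⟩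
    exact ⟨hw1, hy, hw3, hwq, hz3⟩
  · rintro ⟨h1, h2, h3, hq, h4⟩
    refine ⟨parentPos y, y, ⟨⟨h1, rfl, h3⟩, hq⟩,
      isNode_prefix (List.dropLast_prefix y) h1, ?_, h4⟩
    obtain ⟨hpa, hpb⟩ := parent_char.mpr ⟨h2, rfl⟩
    exact ⟨hpa, trivial, fun u h1 h2 _ => hpb u h1 h2⟩

lemma evalQ_foldr_or {α : Type*} (T : XTree) (acc : Pos → Prop) (g : α → XQual)
    (base : XQual) (l : List α) (y : Pos) :
    evalQ T acc (l.foldr (fun e q => XQual.or (g e) q) base) y ↔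
      (∃ e ∈ l, evalQ T acc (g e) y) ∨ evalQ T acc base y := by
  induction l with
  | nil => simp
  | cons e l ih =>
    simp only [List.foldr_cons, evalQ, ih, List.mem_cons]
    constructor
    · rintro (h | (⟨e', he', h⟩ | h))
      · exact Or.inl ⟨e, Or.inl rfl, h⟩
      · exact Or.inl ⟨e', Or.inr he', h⟩
      · exact Or.inr h
    · rintro (⟨e', (rfl | he'), h⟩ | h)
      · exact Or.inl h
      · exact Or.inr (Or.inl ⟨e', he', h⟩)
      · exact Or.inr (Or.inr h)

lemma evalQ_foldr_sigma (T : XTree) (acc : Pos → Prop) (base : XQual)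
    (l : List (Name × Name × AnnVal)) (y : Pos) :
    evalQ T acc (l.foldr
      (fun e q => match annStepSigma e with | some s => XQual.or s q | none => q)
      base) y ↔
      (∃ e ∈ l, ∃ s, annStepSigma e = some s ∧ evalQ T acc s y) ∨
        evalQ T acc base y := by
  induction l with
  | nil => simp
  | cons e l ih =>
    simp only [List.foldr_cons, List.mem_cons]
    cases hs : annStepSigma e with
    | none =>
      rw [show (match (none : Option XQual) with
        | some s => XQual.or s (List.foldr (fun e q => match annStepSigma e with
            | some s => XQual.or s q | none => q) base l)
        | none => List.foldr (fun e q => match annStepSigma e with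
            | some s => XQual.or s q | none => q) base l) = List.foldr
            (fun e q => match annStepSigma e with
            | some s => XQual.or s q | none => q) base l from rfl, ih]
      constructor
      · rintro (⟨e', he', s, hss, h⟩ | h)
        · exact Or.inl ⟨e', Or.inr he', s, hss, h⟩
        · exact Or.inr h
      · rintro (⟨e', (rfl | he'), s, hss, h⟩ | h)
        · rw [hs] at hss; exact absurd hss (by simp)
        · exact Or.inl ⟨e', he', s, hss, h⟩
        · exact Or.inr h
    | some s =>
      rw [show (match (some s : Option XQual) with
        | some s => XQual.or s (List.foldr (fun e q => match annStepSigma e with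
            | some s => XQual.or s q | none => q) base l)
        | none => List.foldr (fun e q => match annStepSigma e with
            | some s => XQual.or s q | none => q) base l) = XQual.or s (List.foldr
            (fun e q => match annStepSigma e with
            | some s => XQual.or s q | none => q) base l) from rfl]
      simp only [evalQ, ih]
      constructor
      · rintro (h | (⟨e', he', s', hss, h⟩ | h))
        · exact Or.inl ⟨e, Or.inl rfl, s, hs, h⟩
        · exact Or.inl ⟨e', Or.inr he', s', hss, h⟩
        · exact Or.inr h
      · rintro (⟨e', (rfl | he'), s', hss, h⟩ | h)
        · rw [hs] at hss
          injection hss with hss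
          exact Or.inl (hss ▸ h)
        · exact Or.inr (Or.inl ⟨e', he', s', hss, h⟩)
        · exact Or.inr (Or.inr h)

/-! ### `qual1` captures `ConcernedR`, `qual2` captures `ValidR` -/

lemma evalQ_qual1_iff {S : AccessSpec} {T : XTree} (hT : Conforms T S.D) {y : Pos}
    (hy : T.IsNode y) :
    evalQ T (fun _ => True) (qual1 S) y ↔ ConcernedR S T y := by
  unfold qual1
  rw [evalQ_foldr_or]
  constructor
  · rintro (⟨e, he, hstep⟩ | hroot)
    · obtain ⟨-, hne, hty, htp⟩ := evalQ_annStep.mp hstep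
      exact Or.inr ⟨e.2.2, e.1, e.2.1, hne, hty, htp, lookup_of_mem S he⟩
    · exact Or.inl ((typeAt_root_iff hT).mp (evalQ_selfName.mp hroot).2)
  · rintro (rfl | ⟨v, A, B, hne, htB, htA, hlk⟩)
    · exact Or.inr (evalQ_selfName.mpr ⟨hy, typeAt_nil hT⟩)
    · left
      obtain ⟨e, he, h1, h2, h3⟩ := lookup_eq_some hlk
      exact ⟨e, he, evalQ_annStep.mpr ⟨hy, hne, h2 ▸ htB, h1 ▸ htA⟩⟩

lemma evalQ_qual2_iff {S : AccessSpec} {T : XTree} (hT : Conforms T S.D) {y : Pos}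
    (hy : T.IsNode y) :
    evalQ T (fun _ => True) (qual2 S) y ↔ ValidR S T y := by
  unfold qual2
  rw [evalQ_foldr_sigma]
  constructor
  · rintro (⟨e, he, s, hs, hstep⟩ | hroot)
    · right
      obtain ⟨A', B', v⟩ := e
      have hlk := lookup_of_mem S he
      cases v with
      | Y =>
        simp only [annStepSigma] at hs
        injection hs with hs
        subst hs
        obtain ⟨-, hne, hty, htp⟩ := evalQ_annStep.mp hstep
        exact Or.inl ⟨A', B', hne, hty, htp, hlk⟩
      | N => simp [annStepSigma] at hs
      | cond q =>
        simp only [annStepSigma] at hs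
        injection hs with hs
        subst hs
        obtain ⟨-, hne, hty, hq, htp⟩ := evalQ_annStepCond.mp hstep
        exact Or.inr ⟨q, ⟨A', B', hne, hty, htp, hlk⟩, hq⟩
    · exact Or.inl ((typeAt_root_iff hT).mp (evalQ_selfName.mp hroot).2)
  · rintro (rfl | hvalid)
    · exact Or.inr (evalQ_selfName.mpr ⟨hy, typeAt_nil hT⟩)
    · left
      rcases hvalid with ⟨A, B, hne, htB, htA, hlk⟩ | ⟨q, ⟨A, B, hne, htB, htA, hlk⟩, hq⟩
      · obtain ⟨e, he, h1, h2, h3⟩ := lookup_eq_some hlk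
        refine ⟨e, he, annStep e, ?_, evalQ_annStep.mpr ⟨hy, hne, h2 ▸ htB, h1 ▸ htA⟩⟩
        obtain ⟨A', B', v⟩ := e
        simp only at h3
        subst h3
        rfl
      · obtain ⟨e, he, h1, h2, h3⟩ := lookup_eq_some hlk
        obtain ⟨A', B', v⟩ := e
        simp only at h1 h2 h3
        subst h3
        refine ⟨(A', B', AnnVal.cond q), he, _, rfl, ?_⟩
        exact evalQ_annStepCond.mpr ⟨hy, hne, h2.symm ▸ htB, hq, h1.symm ▸ htA⟩

/-! ### Small evaluation equations -/

lemma evalP_filter (t : XTree) (acc : Pos → Prop) (p : XPath) (q : XQual) (x : Pos) :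
    evalP t acc (XPath.filter p q) x = {y | y ∈ evalP t acc p x ∧ evalQ t acc q y} := by
  simp [evalP]

lemma evalP_pos (t : XTree) (acc : Pos → Prop) (p : XPath) (k : ℕ) (x : Pos) :
    evalP t acc (XPath.pos p k) x = nthRev (evalP t acc p x) k := by
  simp [evalP]

lemma evalQ_path (t : XTree) (acc : Pos → Prop) (p : XPath) (x : Pos) :
    evalQ t acc (XQual.path p) x ↔ (evalP t acc p x).Nonempty := by
  simp [evalQ]

/-! ### `A₁^acc` captures condition (i) -/

lemma A1acc_iff_condI {S : AccessSpec} {T : XTree} (hT : Conforms T S.D) {m : Pos}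
    (hm : T.IsNode m) (hel : ∃ A, typeAt T m = some A) :
    evalQ T (fun _ => True) (XQual.path (A1acc S)) m ↔ CondI S T m := by
  set Sp := evalP T (fun _ => True)
    (XPath.filter (XPath.axis Axis.ancestorOrSelf NodeTest.star) (qual1 S)) m with hSpdef
  have hSp : ∀ y, y ∈ Sp ↔ ((y = m ∨ StrictAnc y m) ∧ ConcernedR S T y) := by
    intro y
    rw [hSpdef]
    simp only [evalP, AxisRel, TestOk, Set.mem_setOf_eq]
    constructor
    · rintro ⟨⟨hnode, ⟨hd, -⟩, -⟩, hq⟩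
      exact ⟨hd, (evalQ_qual1_iff hT hnode).mp hq⟩
    · rintro ⟨hd, hc⟩
      have hnode : T.IsNode y := by
        rcases hd with rfl | hd
        · exact hm
        · exact isNode_prefix hd.1 hm
      have hts : (typeAt T y).isSome = true := by
        rcases hd with rfl | hd
        · obtain ⟨A, hA⟩ := hel; simp [hA]
        · obtain ⟨A, hA⟩ := typeAt_isSome_of_strictAnc hT hm hd; simp [hA]
      exact ⟨⟨hnode, ⟨hd, trivial⟩, hts⟩, (evalQ_qual1_iff hT hnode).mpr hc⟩
  have hsub : ∀ y ∈ Sp, y <+: m := by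
    intro y hy
    rcases ((hSp y).mp hy).1 with rfl | hd
    · exact List.prefix_rfl
    · exact hd.1
  have hne : Sp.Nonempty := by
    refine ⟨[], (hSp []).mpr ⟨?_, Or.inl rfl⟩⟩
    rcases eq_or_ne m [] with rfl | hm0
    · exact Or.inl rfl
    · exact Or.inr ⟨List.nil_prefix, Ne.symm hm0⟩
  obtain ⟨y0, hy0, hy0max⟩ := exists_max_mem hsub hne
  have hy0node : T.IsNode y0 := isNode_prefix (hsub y0 hy0) hm
  have hnth : ∀ x, x ∈ nthRev Sp 1 ↔ x = y0 := by
    intro x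
    rw [mem_nthRev_one hsub]
    constructor
    · rintro ⟨hx, hxmax⟩
      have h1 : x <+: y0 := hy0max x hx
      rcases eq_or_ne x y0 with rfl | hne2
      · rfl
      · exact absurd (hxmax y0 hy0 ⟨h1, hne2⟩) (by simp)
    · rintro rfl
      refine ⟨hy0, fun y hy hs => ?_⟩
      have h1 := (hy0max y hy).length_le
      have h2 := length_lt_of_strictAnc hs
      omega
  have heval : evalQ T (fun _ => True) (XQual.path (A1acc S)) m ↔ ValidR S T y0 := by
    rw [evalQ_path]
    unfold A1acc
    rw [evalP_filter, evalP_pos, ← hSpdef]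
    constructor
    · rintro ⟨y, hy1, hy2⟩
      rw [hnth y] at hy1
      subst hy1
      exact (evalQ_qual2_iff hT hy0node).mp hy2
    · intro hval
      exact ⟨y0, Set.mem_setOf_eq ▸ ⟨(hnth y0).mpr rfl, (evalQ_qual2_iff hT hy0node).mpr hval⟩⟩
  rw [heval]
  by_cases hc : ConcernedR S T m
  · have hmem : m ∈ Sp := (hSp m).mpr ⟨Or.inl rfl, hc⟩
    have h1 := hsub y0 hy0
    have h2 := hy0max m hmem
    have hym : y0 = m := h1.eq_of_length (le_antisymm h1.length_le h2.length_le)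
    subst hym
    unfold CondI
    constructor
    · intro hv
      exact Or.inl ⟨hc, hv⟩
    · rintro (⟨-, hv⟩ | ⟨hnc, -⟩)
      · exact hv
      · exact absurd hc hnc
  · have hy0ne : y0 ≠ m := by
      rintro rfl
      exact hc ((hSp _).mp hy0).2
    have hy0anc : StrictAnc y0 m := by
      rcases ((hSp y0).mp hy0).1 with rfl | h
      · exact absurd rfl hy0ne
      · exact h
    have hy0c : ConcernedR S T y0 := ((hSp y0).mp hy0).2
    unfold CondI
    constructor
    · intro hv
      refine Or.inr ⟨hc, y0, hy0anc, hy0c, hv, ?_⟩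
      intro m' h1 h2 hcm'
      have hm'Sp : m' ∈ Sp := (hSp m').mpr ⟨Or.inr h2, Or.inr hcm'⟩
      have ha := (hy0max m' hm'Sp).length_le
      have hb := length_lt_of_strictAnc h1
      omega
    · rintro (⟨hcm, -⟩ | ⟨-, w, hw1, hw2, hw3, hw4⟩)
      · exact absurd hcm hc
      · have hwSp : w ∈ Sp := (hSp w).mpr ⟨Or.inr hw1, hw2⟩
        have hwp : w <+: y0 := hy0max w hwSp
        rcases eq_or_ne w y0 with rfl | hne2
        · exact hw3
        · have hcy0 : Concerned S T y0 := by
            rcases hy0c with rfl | h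
            · exact absurd (List.prefix_nil.mp hwp) hne2
            · exact h
          exact absurd hcy0 (hw4 y0 ⟨hwp, hne2⟩ hy0anc)

/-! ### Accessibility of ancestors of an accessible node -/

lemma accessible_anc_iff {S : AccessSpec} {T : XTree} (hT : Conforms T S.D) {n m : Pos}
    (hn : Accessible S T n) (h : StrictAnc m n) :
    Accessible S T m ↔ evalQ T (fun _ => True) (XQual.path (A1acc S)) m := by
  have hnode : T.IsNode m := isNode_prefix h.1 hn.1
  have hel := typeAt_isSome_of_strictAnc hT hn.1 h
  rw [A1acc_iff_condI hT hnode hel]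
  constructor
  · exact fun ha => ha.2.1
  · intro hci
    refine ⟨hnode, hci, ?_⟩
    intro m' q hanc hcb
    exact hn.2.2 m' q (strictAnc_trans_prefix hanc h.1) hcb

theorem AB_characterizes_view_parent' (S : AccessSpec) (T : XTree)
    (hT : Conforms T S.D) (n : Pos) (hacc : Accessible S T n) (B : Name) :
    ((∃ m, StrictAnc m n ∧ Accessible S T m ∧ typeAt T m = some B ∧
        ∀ z, StrictAnc m z → StrictAnc z n → ¬ Accessible S T z) ↔
      evalQ T (fun _ => True) (XQual.path (AB S B)) n) := by
  have hSp : ∀ y, y ∈ evalP T (fun _ => True) (Aplus S) n ↔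
      (StrictAnc y n ∧ Accessible S T y) := by
    intro y
    unfold Aplus
    rw [evalP_filter]
    simp only [Set.mem_setOf_eq, evalP, AxisRel, TestOk]
    constructor
    · rintro ⟨⟨hnode, ⟨hanc, -⟩, -⟩, hq⟩
      exact ⟨hanc, (accessible_anc_iff hT hacc hanc).mpr hq⟩
    · rintro ⟨hanc, haccy⟩
      obtain ⟨A, hA⟩ := typeAt_isSome_of_strictAnc hT hacc.1 hanc
      exact ⟨⟨haccy.1, ⟨hanc, trivial⟩, by simp [hA]⟩,
        (accessible_anc_iff hT hacc hanc).mp haccy⟩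
  have hsub : ∀ y ∈ evalP T (fun _ => True) (Aplus S) n, y <+: n :=
    fun y hy => ((hSp y).mp hy).1.1
  rw [evalQ_path]
  unfold AB
  rw [show evalP T (fun _ => True)
      (XPath.seq (XPath.pos (Aplus S) 1) (XPath.axis Axis.self (NodeTest.name B))) n =
      {z | ∃ y, y ∈ evalP T (fun _ => True) (XPath.pos (Aplus S) 1) n ∧
        z ∈ evalP T (fun _ => True) (XPath.axis Axis.self (NodeTest.name B)) y} from by
    simp [evalP]]
  rw [evalP_pos]
  constructor
  · rintro ⟨m, hanc, haccm, htm, hmax⟩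
    refine ⟨m, m, ?_, ?_⟩
    · rw [mem_nthRev_one hsub]
      refine ⟨(hSp m).mpr ⟨hanc, haccm⟩, ?_⟩
      intro y hy hs
      obtain ⟨hy1, hy2⟩ := (hSp y).mp hy
      exact hmax y hs hy1 hy2
    · simp only [evalP, AxisRel, TestOk, Set.mem_setOf_eq]
      exact ⟨haccm.1, trivial, htm⟩
  · rintro ⟨z, y, hy, hz⟩
    simp only [evalP, AxisRel, TestOk, Set.mem_setOf_eq] at hz
    obtain ⟨-, rfl, htz⟩ := hz
    rw [mem_nthRev_one hsub] at hy
    obtain ⟨hySp, hymax⟩ := hy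
    obtain ⟨hanc, haccy⟩ := (hSp z).mp hySp
    refine ⟨z, hanc, haccy, htz, ?_⟩
    intro w h1 h2 hw
    exact hymax w ((hSp w).mpr ⟨h2, hw⟩) h1
/-- For any security view `V = (D_v, ann)`, any instance `T` of the
original DTD `D` with view `T_v`, any accessible element node `n` of `T`, and any
element type `B` : the parent of `n` in the view `T_v` — i.e. the nearest accessible
ancestor of `n` in `T` — is of type `B` iff `n ⊨ A^B` in `T`, where
`A^B := A⁺[1]/ε::B` and `A⁺ := ↑⁺::*[A₁^acc]`. -/
theorem AB_characterizes_view_parent (S : AccessSpec) (T : XTree)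
    (hT : Conforms T S.D) (n : Pos) (hacc : Accessible S T n) (B : Name) :
    ((∃ m, StrictAnc m n ∧ Accessible S T m ∧ typeAt T m = some B ∧
        ∀ z, StrictAnc m z → StrictAnc z n → ¬ Accessible S T z) ↔
      evalQ T (fun _ => True) (XQual.path (AB S B)) n) := by
  exact AB_characterizes_view_parent' S T hT n hacc B
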